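/- Let φ be the standard Gaussian quantile inverse G^{−1}. For all u ∈ (0, 1/4), the bounds −√(2 log(1/u)) ≤ G^{−1}(u) ≤ −(1/2)√(log(1/u)) hold, where G is the standard normal CDF. -/

import Mathlib

open MeasureTheory

/-- The standard normal cumulative distribution function. -/
noncomputable def stdGaussCDF (u : ℝ) : ℝ :=
  ∫ s in Set.Iic u, Real.exp (-s ^ 2 / 2) / Real.sqrt (2 * Real.pi)

open Real Set Filter

noncomputable def gpdf (s : ℝ) : ℝ := Real.exp (-s ^ 2 / 2) / Real.sqrt (2 * Real.pi)

lemma sqrt2pi_lb : (2.5066 : ℝ) ≤ Real.sqrt (2 * Real.pi) := by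
  have h := Real.pi_gt_d6
  have h2 : ((2.5066:ℝ))^2 ≤ 2 * Real.pi := by nlinarith
  nlinarith [Real.sq_sqrt (by positivity : (0:ℝ) ≤ 2*Real.pi), Real.sqrt_nonneg (2*Real.pi)]

lemma sqrt2pi_ub : Real.sqrt (2 * Real.pi) ≤ 2.50664 := by
  have h := Real.pi_lt_d6
  have : (2*Real.pi) ≤ (2.50664:ℝ)^2 := by nlinarith
  calc Real.sqrt (2*Real.pi) ≤ Real.sqrt ((2.50664:ℝ)^2) := Real.sqrt_le_sqrt this
    _ = 2.50664 := by rw [Real.sqrt_sq]; norm_num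

lemma sqrt2pi_pos : (0:ℝ) < Real.sqrt (2 * Real.pi) := by positivity

lemma gpdf_pos (s : ℝ) : 0 < gpdf s := by
  unfold gpdf; positivity

lemma gpdf_integrable : Integrable gpdf := by
  have h : Integrable (fun s : ℝ => Real.exp (-(1/2 : ℝ) * s ^ 2)) := integrable_exp_neg_mul_sq (by norm_num)
  have := h.div_const (Real.sqrt (2 * Real.pi))
  refine this.congr ?_
  filter_upwards with s
  unfold gpdf
  ring_nf

lemma gpdf_continuous : Continuous gpdf := by
  unfold gpdf
  fun_prop

lemma cdf_eq (u : ℝ) : stdGaussCDF u = ∫ s in Set.Iic u, gpdf s := rfl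

lemma cdf_sub (a b : ℝ) : stdGaussCDF b - stdGaussCDF a = ∫ s in a..b, gpdf s := by
  rw [cdf_eq, cdf_eq]
  exact intervalIntegral.integral_Iic_sub_Iic gpdf_integrable.integrableOn gpdf_integrable.integrableOn

lemma cdf_strictMono : StrictMono stdGaussCDF := by
  intro a b hab
  have h : 0 < ∫ s in a..b, gpdf s :=
    intervalIntegral.intervalIntegral_pos_of_pos
      (gpdf_integrable.intervalIntegrable) gpdf_pos hab
  have := cdf_sub a b
  linarith

lemma cdf_continuous : Continuous stdGaussCDF := by
  have h : Continuous fun b => ∫ s in (0:ℝ)..b, gpdf s :=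
    gpdf_integrable.continuous_primitive 0
  have : stdGaussCDF = fun b => stdGaussCDF 0 + ∫ s in (0:ℝ)..b, gpdf s := by
    funext b
    have := cdf_sub 0 b
    linarith
  rw [this]
  exact continuous_const.add h

lemma cdf_neg_eq (c : ℝ) : stdGaussCDF (-c) = ∫ s in Set.Ioi c, gpdf s := by
  rw [cdf_eq]
  have h1 : (∫ s in Set.Iic (-c), gpdf s) = ∫ s in Set.Iic (-c), gpdf (-s) := by
    apply setIntegral_congr_fun measurableSet_Iic
    intro s _
    simp only [gpdf, neg_neg, even_two.neg_pow]
  rw [h1, integral_comp_neg_Iic, neg_neg]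

lemma integral_gpdf_Ioi_zero : (∫ s in Set.Ioi (0:ℝ), gpdf s) = 1/2 := by
  have h0 : (∫ s in Set.Ioi (0:ℝ), Real.exp (-(1/2:ℝ) * s ^ 2)) = Real.sqrt (Real.pi / (1/2)) / 2 :=
    integral_gaussian_Ioi (1/2)
  have h1 : (∫ s in Set.Ioi (0:ℝ), gpdf s)
      = (∫ s in Set.Ioi (0:ℝ), Real.exp (-(1/2:ℝ) * s ^ 2)) / Real.sqrt (2 * Real.pi) := by
    rw [← integral_div]
    apply setIntegral_congr_fun measurableSet_Ioi
    intro s _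
    unfold gpdf
    ring_nf
  rw [h1, h0]
  rw [show Real.pi / (1/2) = 2 * Real.pi by ring]
  field_simp

lemma exp_ge_deg5 (t : ℝ) (ht : 0 ≤ t) :
    1 + t + t^2/2 + t^3/6 + t^4/24 + t^5/120 ≤ Real.exp t := by
  have h := Real.sum_le_exp_of_nonneg ht 6
  have : ∑ i ∈ Finset.range 6, t ^ i / (i.factorial : ℝ) = 1 + t + t^2/2 + t^3/6 + t^4/24 + t^5/120 := by
    simp [Finset.sum_range_succ, Nat.factorial]
    try ring
  linarith [this ▸ h]

lemma exp_ge_deg3 (t : ℝ) (ht : 0 ≤ t) :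
    1 + t + t^2/2 + t^3/6 ≤ Real.exp t := by
  have h := exp_ge_deg5 t ht
  nlinarith [pow_nonneg ht 4, pow_nonneg ht 5]

lemma exp_neg_le_quad (t : ℝ) (ht : 0 ≤ t) : Real.exp (-t) ≤ 1 - t + t^2/2 := by
  have h := exp_ge_deg3 t ht
  have hpos : (0:ℝ) < 1 + t + t^2/2 + t^3/6 := by positivity
  have hexp : (0:ℝ) < Real.exp t := Real.exp_pos t
  rw [Real.exp_neg]
  rw [inv_le_iff_one_le_mul₀ hexp]
  have key : (1:ℝ) ≤ (1 - t + t^2/2) * (1 + t + t^2/2 + t^3/6) := by nlinarith [pow_nonneg ht 3, pow_nonneg ht 4, pow_nonneg ht 5]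
  calc (1:ℝ) ≤ (1 - t + t^2/2) * (1 + t + t^2/2 + t^3/6) := key
    _ ≤ (1 - t + t^2/2) * Real.exp t := by
        apply mul_le_mul_of_nonneg_left h
        nlinarith [key]

lemma poly_integral (c : ℝ) :
    ∫ s in (0:ℝ)..c, (1 - s^2/2 + s^4/8) = c - c^3/6 + c^5/40 := by
  have h : ∀ s ∈ Set.uIcc (0:ℝ) c,
      HasDerivAt (fun s : ℝ => s - s^3/6 + s^5/40) (1 - s^2/2 + s^4/8) s := by
    intro s _
    have : HasDerivAt (fun s : ℝ => s - s^3/6 + s^5/40)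
        (1 - (3:ℕ)*s^(3-1)/6 + (5:ℕ)*s^(5-1)/40) s :=
      ((hasDerivAt_id s).sub ((hasDerivAt_pow 3 s).div_const 6)).add
        ((hasDerivAt_pow 5 s).div_const 40)
    convert this using 1
    norm_num
    ring
  rw [intervalIntegral.integral_eq_sub_of_hasDerivAt h
    ((Continuous.intervalIntegrable (by fun_prop) _ _))]
  ring

lemma gpdf_le_poly (s : ℝ) : gpdf s ≤ (1 - s^2/2 + s^4/8) / Real.sqrt (2*Real.pi) := by
  unfold gpdf
  have h := exp_neg_le_quad (s^2/2) (by positivity)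
  rw [show -(s^2/2) = -s^2/2 by ring] at h
  have h2 : 1 - s^2/2 + (s^2/2)^2/2 = 1 - s^2/2 + s^4/8 := by ring
  rw [h2] at h
  gcongr

lemma cdf_neg_lb (c : ℝ) (hc : 0 ≤ c) :
    1/2 - (c - c^3/6 + c^5/40) / Real.sqrt (2*Real.pi) ≤ stdGaussCDF (-c) := by
  rw [cdf_neg_eq]
  have hsplit : (∫ s in Set.Ioc (0:ℝ) c, gpdf s) + (∫ s in Set.Ioi c, gpdf s)
      = ∫ s in Set.Ioi (0:ℝ), gpdf s := by
    rw [← setIntegral_union (Set.Ioc_disjoint_Ioi le_rfl) measurableSet_Ioi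
      gpdf_integrable.integrableOn gpdf_integrable.integrableOn,
      Set.Ioc_union_Ioi_eq_Ioi hc]
  rw [integral_gpdf_Ioi_zero] at hsplit
  have hb : (∫ s in Set.Ioc (0:ℝ) c, gpdf s) ≤ (c - c^3/6 + c^5/40) / Real.sqrt (2*Real.pi) := by
    rw [← intervalIntegral.integral_of_le hc]
    have h2 : (∫ s in (0:ℝ)..c, (1 - s^2/2 + s^4/8) / Real.sqrt (2*Real.pi))
        = (c - c^3/6 + c^5/40) / Real.sqrt (2*Real.pi) := by
      rw [intervalIntegral.integral_div, poly_integral]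
    rw [← h2]
    apply intervalIntegral.integral_mono_on hc
      (gpdf_integrable.intervalIntegrable)
      (Continuous.intervalIntegrable (by fun_prop) _ _)
    intro s _
    exact gpdf_le_poly s
  linarith

lemma cdf_neg_ub (x : ℝ) (hx : 1 ≤ x) : stdGaussCDF (-x) ≤ Real.exp (-x^2/2) := by
  rw [cdf_eq]
  have hderiv : ∀ s ∈ Set.Iic (-x), HasDerivAt (fun s : ℝ => Real.exp (-s^2/2))
      (Real.exp (-s^2/2) * -s) s := by
    intro s _
    have hg : HasDerivAt (fun s : ℝ => -s^2/2) (-s) s := by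
      have := ((hasDerivAt_pow 2 s).neg).div_const 2
      refine this.congr_deriv ?_
      push_cast; ring
    exact hg.exp
  have hint : IntegrableOn (fun s : ℝ => Real.exp (-s^2/2) * -s) (Set.Iic (-x)) := by
    have h := (integrable_mul_exp_neg_mul_sq (by norm_num : (0:ℝ) < 1/2)).neg
    refine (h.congr ?_).integrableOn
    filter_upwards with s
    simp only [Pi.neg_apply]
    rw [show -(1/2:ℝ) * s^2 = -s^2/2 by ring]
    ring
  have htend : Tendsto (fun s : ℝ => Real.exp (-s^2/2)) atBot (nhds 0) := by
    have hsq : Tendsto (fun s : ℝ => s^2) atBot atTop := by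
      have h0 : Tendsto (fun x : ℝ => x^2) atTop atTop := tendsto_pow_atTop two_ne_zero
      have h1 : Tendsto (Neg.neg : ℝ → ℝ) atBot atTop := tendsto_neg_atBot_atTop
      have := h0.comp h1
      simpa [Function.comp_def, even_two.neg_pow] using this
    have h4 : Tendsto (fun s : ℝ => s^2/2) atBot atTop := hsq.atTop_div_const (by norm_num)
    have h5 : Tendsto (fun s : ℝ => -s^2/2) atBot atBot := by
      have := tendsto_neg_atTop_atBot.comp h4
      simpa [Function.comp_def, neg_div] using this
    exact Real.tendsto_exp_atBot.comp h5
  have hval : (∫ s in Set.Iic (-x), Real.exp (-s^2/2) * -s) = Real.exp (-x^2/2) := by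
    rw [integral_Iic_of_hasDerivAt_of_tendsto' hderiv hint htend]
    rw [show -(-x)^2/2 = -x^2/2 by ring]
    ring
  rw [← hval]
  apply setIntegral_mono_on gpdf_integrable.integrableOn hint measurableSet_Iic
  intro s hs
  simp only [Set.mem_Iic] at hs
  unfold gpdf
  rw [div_le_iff₀ sqrt2pi_pos]
  have h1 : (1:ℝ) ≤ -s := by linarith
  have h2 : (1:ℝ) ≤ -s * Real.sqrt (2*Real.pi) := by nlinarith [sqrt2pi_lb]
  calc Real.exp (-s^2/2) = Real.exp (-s^2/2) * 1 := (mul_one _).symm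
    _ ≤ Real.exp (-s^2/2) * (-s * Real.sqrt (2*Real.pi)) :=
        mul_le_mul_of_nonneg_left h2 (Real.exp_pos _).le
    _ = Real.exp (-s^2/2) * -s * Real.sqrt (2*Real.pi) := by ring

lemma far_tail (y : ℝ) (hy : (0.95:ℝ) ≤ y) : Real.exp (-(4*y^2)) ≤ stdGaussCDF (-y) := by
  rw [cdf_neg_eq]
  have hderiv : ∀ s ∈ Set.Ici y, HasDerivAt (fun s : ℝ => -Real.exp (-4*s^2))
      (8 * (s * Real.exp (-4*s^2))) s := by
    intro s _
    have hg : HasDerivAt (fun s : ℝ => -4*s^2) (-8*s) s := by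
      have := (hasDerivAt_pow 2 s).const_mul (-4 : ℝ)
      refine this.congr_deriv ?_
      push_cast; ring
    have := hg.exp.neg
    refine this.congr_deriv ?_
    ring
  have hint : IntegrableOn (fun s : ℝ => 8 * (s * Real.exp (-4*s^2))) (Set.Ioi y) :=
    ((integrable_mul_exp_neg_mul_sq (by norm_num : (0:ℝ) < 4)).const_mul 8).integrableOn
  have htend : Tendsto (fun s : ℝ => -Real.exp (-4*s^2)) atTop (nhds 0) := by
    have hsq : Tendsto (fun s : ℝ => s^2) atTop atTop := tendsto_pow_atTop two_ne_zero
    have h4 : Tendsto (fun s : ℝ => 4*s^2) atTop atTop := hsq.const_mul_atTop (by norm_num)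
    have h5 : Tendsto (fun s : ℝ => -4*s^2) atTop atBot := by
      have := tendsto_neg_atTop_atBot.comp h4
      simpa [Function.comp_def, neg_mul] using this
    have := (Real.tendsto_exp_atBot.comp h5).neg
    simpa using this
  have hval : (∫ s in Set.Ioi y, 8 * (s * Real.exp (-4*s^2))) = Real.exp (-(4*y^2)) := by
    rw [integral_Ioi_of_hasDerivAt_of_tendsto' hderiv hint htend]
    rw [show -(4*y^2) = -4*y^2 by ring]
    ring
  rw [← hval]
  apply setIntegral_mono_on hint gpdf_integrable.integrableOn measurableSet_Ioi
  intro s hs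
  simp only [Set.mem_Ioi] at hs
  have hs95 : (0.95:ℝ) ≤ s := le_of_lt (lt_of_le_of_lt hy hs)
  unfold gpdf
  rw [le_div_iff₀ sqrt2pi_pos]
  have hsplit : Real.exp (-s^2/2) = Real.exp (7*s^2/2 - 3.15875) * Real.exp 3.15875 * Real.exp (-4*s^2) := by
    rw [← Real.exp_add, ← Real.exp_add]
    congr 1
    ring
  rw [hsplit]
  have e2 : (23.17:ℝ) ≤ Real.exp 3.15875 := by
    have h1 : Real.exp 3.15875 = Real.exp 1 * Real.exp 1 * Real.exp 1 * Real.exp 0.15875 := by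
      rw [← Real.exp_add, ← Real.exp_add, ← Real.exp_add]; norm_num
    have h2 : (2.7182818:ℝ) < Real.exp 1 := by
      have := Real.exp_one_gt_d9; linarith
    have h3 : (1.15875:ℝ) ≤ Real.exp 0.15875 := by
      have := Real.add_one_le_exp (0.15875:ℝ); linarith
    have h4 : (20.0855:ℝ) ≤ Real.exp 1 * Real.exp 1 * Real.exp 1 := by nlinarith
    rw [h1]
    nlinarith [Real.exp_pos (0.15875:ℝ)]
  have e3 : 1 + (7*s^2/2 - 3.15875) ≤ Real.exp (7*s^2/2 - 3.15875) := by
    linarith [Real.add_one_le_exp (7*s^2/2 - 3.15875)]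
  have hexp4 : (0:ℝ) < Real.exp (-4*s^2) := Real.exp_pos _
  have key : 8 * s * Real.sqrt (2*Real.pi) ≤ (1 + (7*s^2/2 - 3.15875)) * 23.17 := by
    nlinarith [sq_nonneg (s - 0.95), sqrt2pi_ub]
  have key2 : (1 + (7*s^2/2 - 3.15875)) * 23.17
      ≤ Real.exp (7*s^2/2 - 3.15875) * Real.exp 3.15875 := by
    apply mul_le_mul e3 e2 (by norm_num) (le_of_lt (Real.exp_pos _))
  nlinarith [Real.exp_pos (7*s^2/2 - 3.15875)]

lemma exp_neg_le_of (t Q : ℝ) (ht : 0 ≤ t) (hQ : 0 ≤ Q)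
    (h : 1 ≤ Q * (1 + t + t^2/2 + t^3/6 + t^4/24 + t^5/120)) : Real.exp (-t) ≤ Q := by
  have hS : 1 + t + t^2/2 + t^3/6 + t^4/24 + t^5/120 ≤ Real.exp t := exp_ge_deg5 t ht
  have hSpos : (0:ℝ) < 1 + t + t^2/2 + t^3/6 + t^4/24 + t^5/120 := by positivity
  have h2 : Real.exp (-t) * Real.exp t = 1 := by rw [← Real.exp_add]; simp
  by_contra hcon
  push_neg at hcon
  have h3 : Q * (1 + t + t^2/2 + t^3/6 + t^4/24 + t^5/120)
      < Real.exp (-t) * (1 + t + t^2/2 + t^3/6 + t^4/24 + t^5/120) :=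
    mul_lt_mul_of_pos_right hcon hSpos
  have h4 : Real.exp (-t) * (1 + t + t^2/2 + t^3/6 + t^4/24 + t^5/120)
      ≤ Real.exp (-t) * Real.exp t := mul_le_mul_of_nonneg_left hS (Real.exp_pos _).le
  linarith

lemma mid_interval (a b y : ℝ) (ha : 0 ≤ a) (hay : a ≤ y) (hyb : y ≤ b) (Q : ℝ) (hQ : 0 ≤ Q)
    (h1 : 1 ≤ Q * (1 + 4*a^2 + (4*a^2)^2/2 + (4*a^2)^3/6 + (4*a^2)^4/24 + (4*a^2)^5/120))
    (h2 : Q ≤ 1/2 - (b - b^3/6 + b^5/40)/(2.5066:ℝ))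
    (hb0 : 0 ≤ b) (hpb : 0 ≤ b - b^3/6 + b^5/40) :
    Real.exp (-(4*y^2)) ≤ stdGaussCDF (-y) := by
  have e1 : Real.exp (-(4*y^2)) ≤ Real.exp (-(4*a^2)) := Real.exp_le_exp.mpr (by nlinarith)
  have e2 : Real.exp (-(4*a^2)) ≤ Q := exp_neg_le_of _ _ (by positivity) hQ h1
  have e3 : (b - b^3/6 + b^5/40)/Real.sqrt (2*Real.pi) ≤ (b - b^3/6 + b^5/40)/2.5066 := by
    exact div_le_div_of_nonneg_left hpb (by norm_num) sqrt2pi_lb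
  have e4 := cdf_neg_lb b hb0
  have e5 : stdGaussCDF (-b) ≤ stdGaussCDF (-y) := cdf_strictMono.monotone (by linarith)
  linarith

lemma tail_ge_main (y : ℝ) (hy : (0.588:ℝ) ≤ y) :
    Real.exp (-(4*y^2)) ≤ stdGaussCDF (-y) := by
  rcases le_or_gt 0.95 y with h | h
  · exact far_tail y h
  rcases le_or_gt 0.75 y with h4 | h4
  · exact mid_interval 0.75 0.95 y (by norm_num) h4 h.le 0.115 (by norm_num)
      (by norm_num) (by norm_num) (by norm_num) (by norm_num)
  rcases le_or_gt 0.66 y with h3 | h3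
  · exact mid_interval 0.66 0.75 y (by norm_num) h3 h4.le 0.185 (by norm_num)
      (by norm_num) (by norm_num) (by norm_num) (by norm_num)
  rcases le_or_gt 0.6 y with h2 | h2
  · exact mid_interval 0.6 0.66 y (by norm_num) h2 h3.le 0.245 (by norm_num)
      (by norm_num) (by norm_num) (by norm_num) (by norm_num)
  · exact mid_interval 0.588 0.6 y (by norm_num) hy h2.le 0.26 (by norm_num)
      (by norm_num) (by norm_num) (by norm_num) (by norm_num)

/-- For all `u ∈ (0, 1/4)`, `−√(2 log(1/u)) ≤ G⁻¹(u) ≤ −(1/2)√(log(1/u))` where `G`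
is the standard normal CDF. -/
theorem gauss_quantile_bounds (u : ℝ) (hu0 : 0 < u) (hu : u < 1 / 4) :
    -Real.sqrt (2 * Real.log (1 / u)) ≤ Function.invFun stdGaussCDF u ∧
    Function.invFun stdGaussCDF u ≤ -(1 / 2) * Real.sqrt (Real.log (1 / u)) := by
  set L := Real.log (1 / u) with hLdef
  have h1u : (4:ℝ) < 1/u := by
    rw [lt_div_iff₀ hu0]; linarith
  have hL4 : Real.log 4 < L := Real.log_lt_log (by norm_num) h1u
  have hlog4 : (1.386:ℝ) ≤ Real.log 4 := by
    have h2 := Real.log_two_gt_d9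
    rw [show (4:ℝ) = 2^2 by norm_num, Real.log_pow]
    push_cast
    linarith
  have hL : (1.386:ℝ) ≤ L := by linarith
  have hLpos : (0:ℝ) < L := by linarith
  have hexpL : Real.exp (-L) = u := by
    rw [hLdef, one_div, Real.log_inv, neg_neg, Real.exp_log hu0]
  set x := Real.sqrt (2 * L) with hxdef
  set y := Real.sqrt L / 2 with hydef
  have hx0 : 0 ≤ x := Real.sqrt_nonneg _
  have hx2 : x^2 = 2*L := Real.sq_sqrt (by positivity)
  have hx1 : (1:ℝ) ≤ x := by nlinarith
  have hy0 : 0 ≤ Real.sqrt L := Real.sqrt_nonneg _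
  have hy2 : y^2 = L/4 := by
    rw [hydef, div_pow, Real.sq_sqrt hLpos.le]; norm_num
  have hy588 : (0.588:ℝ) ≤ y := by
    have : (0:ℝ) ≤ y := by rw [hydef]; positivity
    nlinarith
  have hxu : stdGaussCDF (-x) ≤ u := by
    have h := cdf_neg_ub x hx1
    have : Real.exp (-x^2/2) = u := by
      rw [hx2, show -(2*L)/2 = -L by ring, hexpL]
    linarith
  have hyu : u ≤ stdGaussCDF (-y) := by
    have h := tail_ge_main y hy588
    have : Real.exp (-(4*y^2)) = u := by
      rw [hy2, show -(4*(L/4)) = -L by ring, hexpL]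
    linarith
  have hxy : -x ≤ -y := by
    have h1 : Real.sqrt L ≤ Real.sqrt (2*L) := Real.sqrt_le_sqrt (by linarith)
    have : y ≤ x := by rw [hydef]; linarith
    linarith
  obtain ⟨t0, _, ht0⟩ := intermediate_value_Icc hxy cdf_continuous.continuousOn ⟨hxu, hyu⟩
  have hinv : stdGaussCDF (Function.invFun stdGaussCDF u) = u := Function.invFun_eq ⟨t0, ht0⟩
  set t := Function.invFun stdGaussCDF u with htdef
  constructor
  · by_contra hcon
    push_neg at hcon
    have : stdGaussCDF t < stdGaussCDF (-x) := cdf_strictMono hcon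
    rw [hinv] at this
    linarith
  · by_contra hcon
    push_neg at hcon
    have h2 : -y < t := by rw [hydef]; linarith
    have : stdGaussCDF (-y) < stdGaussCDF t := cdf_strictMono h2
    rw [hinv] at this
    linarith
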